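/- For N ≥ 3, |N(log N + 2γ − 1) − D(N)| ≤ C√N for an absolute constant C, where γ is Euler's constant. -/

import Mathlib

open Finset

/-- `d n` is the number of positive divisors of `n`. -/
noncomputable def divFun (n : ℕ) : ℕ := n.divisors.card

/-- `D N = ∑_{n=1}^N d(n)`, the summatory divisor function. -/
noncomputable def sumDiv (N : ℕ) : ℕ := ∑ n ∈ Finset.Icc 1 N, divFun n

-- S = set of pairs (a,b) with 1 ≤ a,b and a*b ≤ N
def pairSet (N : ℕ) : Finset (ℕ × ℕ) :=
  (Finset.Icc 1 N ×ˢ Finset.Icc 1 N).filter (fun p => p.1 * p.2 ≤ N)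

lemma mem_pairSet {N : ℕ} {p : ℕ × ℕ} :
    p ∈ pairSet N ↔ 1 ≤ p.1 ∧ 1 ≤ p.2 ∧ p.1 * p.2 ≤ N := by
  simp only [pairSet, mem_filter, mem_product, mem_Icc]
  constructor
  · rintro ⟨⟨⟨h1, _⟩, ⟨h2, _⟩⟩, h3⟩; exact ⟨h1, h2, h3⟩
  · rintro ⟨h1, h2, h3⟩
    refine ⟨⟨⟨h1, ?_⟩, ⟨h2, ?_⟩⟩, h3⟩
    · calc p.1 ≤ p.1 * p.2 := Nat.le_mul_of_pos_right _ h2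
        _ ≤ N := h3
    · calc p.2 ≤ p.1 * p.2 := Nat.le_mul_of_pos_left _ h1
        _ ≤ N := h3

lemma sumDiv_eq_card (N : ℕ) : sumDiv N = (pairSet N).card := by
  have h : pairSet N = (Finset.Icc 1 N).biUnion (fun n => n.divisorsAntidiagonal) := by
    ext p
    simp only [mem_biUnion, mem_Icc, Nat.mem_divisorsAntidiagonal, mem_pairSet]
    constructor
    · rintro ⟨h1, h2, h3⟩
      exact ⟨p.1 * p.2, ⟨Nat.one_le_iff_ne_zero.2 (by positivity), h3⟩, rfl, by positivity⟩
    · rintro ⟨n, ⟨hn1, hn2⟩, rfl, -⟩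
      have hp1 : p.1 ≠ 0 := by rintro h; simp [h] at hn1
      have hp2 : p.2 ≠ 0 := by rintro h; simp [h] at hn1
      exact ⟨Nat.one_le_iff_ne_zero.2 hp1, Nat.one_le_iff_ne_zero.2 hp2, hn2⟩
  rw [h, Finset.card_biUnion]
  · unfold sumDiv divFun
    refine Finset.sum_congr rfl fun n _ => ?_
    rw [← Nat.map_div_right_divisors, Finset.card_map]
  · intro x hx y hy hxy
    simp only [Finset.disjoint_left]
    intro p hp hq
    exact hxy ((Nat.mem_divisorsAntidiagonal.1 hp).1 ▸ (Nat.mem_divisorsAntidiagonal.1 hq).1.symm ▸ rfl)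

lemma card_filter_fst (N : ℕ) :
    ((pairSet N).filter (fun p => p.1 ≤ N.sqrt)).card
      = ∑ a ∈ Finset.Icc 1 N.sqrt, N / a := by
  set K := N.sqrt
  have h : (pairSet N).filter (fun p => p.1 ≤ K)
      = (Finset.Icc 1 K).biUnion (fun a => {a} ×ˢ Finset.Icc 1 (N / a)) := by
    ext p
    simp only [mem_biUnion, mem_filter, mem_pairSet, mem_product, mem_Icc, mem_singleton]
    constructor
    · rintro ⟨⟨h1, h2, h3⟩, h4⟩
      exact ⟨p.1, ⟨h1, h4⟩, rfl, h2, (Nat.le_div_iff_mul_le h1).2 (by rwa [mul_comm])⟩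
    · rintro ⟨a, ⟨ha1, ha2⟩, rfl, hb1, hb2⟩
      have := (Nat.le_div_iff_mul_le ha1).1 hb2
      exact ⟨⟨ha1, hb1, by rwa [mul_comm] at this⟩, ha2⟩
  rw [h, Finset.card_biUnion]
  · refine Finset.sum_congr rfl fun a _ => ?_
    rw [Finset.card_product, Finset.card_singleton, Nat.card_Icc]
    simp
  · intro x hx y hy hxy
    simp only [Finset.disjoint_left, mem_product, mem_singleton]
    rintro p ⟨rfl, -⟩ ⟨rfl, -⟩
    exact hxy rfl

lemma hyperbola' (N : ℕ) :
    (pairSet N).card + N.sqrt * N.sqrt = 2 * ∑ a ∈ Finset.Icc 1 N.sqrt, N / a := by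
  set K := N.sqrt with hK
  set S₁ := (pairSet N).filter (fun p => p.1 ≤ K)
  set S₂ := (pairSet N).filter (fun p => p.2 ≤ K)
  have hunion : S₁ ∪ S₂ = pairSet N := by
    ext p
    simp only [S₁, S₂, mem_union, mem_filter]
    constructor
    · rintro (⟨h, -⟩ | ⟨h, -⟩) <;> exact h
    · intro h
      by_contra hc
      push_neg at hc
      obtain ⟨h1, h2⟩ := hc
      have hp := mem_pairSet.1 h
      have ha : K + 1 ≤ p.1 := h1 h
      have hb : K + 1 ≤ p.2 := h2 h
      have : (K+1) * (K+1) ≤ N := le_trans (Nat.mul_le_mul ha hb) hp.2.2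
      have h := Nat.lt_succ_sqrt' N
      rw [pow_two, ← hK] at h
      simp only [Nat.succ_eq_add_one] at h
      omega
  have hinter : S₁ ∩ S₂ = Finset.Icc 1 K ×ˢ Finset.Icc 1 K := by
    ext p
    simp only [S₁, S₂, mem_inter, mem_filter, mem_pairSet, mem_product, mem_Icc]
    constructor
    · rintro ⟨⟨⟨h1, h2, -⟩, h4⟩, ⟨-, h5⟩⟩
      exact ⟨⟨h1, h4⟩, h2, h5⟩
    · rintro ⟨⟨h1, h2⟩, h3, h4⟩
      have : p.1 * p.2 ≤ K * K := Nat.mul_le_mul h2 h4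
      have hKN : K * K ≤ N := by have := Nat.sqrt_le' N; rwa [pow_two] at this
      exact ⟨⟨⟨h1, h3, le_trans this hKN⟩, h2⟩, ⟨h1, h3, le_trans this hKN⟩, h4⟩
  have hswap : S₂ = S₁.image Prod.swap := by
    ext p
    simp only [S₁, S₂, mem_image, mem_filter, mem_pairSet]
    constructor
    · rintro ⟨⟨h1, h2, h3⟩, h4⟩
      exact ⟨p.swap, ⟨⟨h2, h1, by rwa [mul_comm]⟩, h4⟩, Prod.swap_swap p⟩
    · rintro ⟨q, ⟨⟨h1, h2, h3⟩, h4⟩, rfl⟩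
      exact ⟨⟨h2, h1, by rwa [mul_comm]⟩, h4⟩
  have hcard2 : S₂.card = S₁.card := by
    rw [hswap, Finset.card_image_of_injective _ Prod.swap_injective]
  have := Finset.card_union_add_card_inter S₁ S₂
  rw [hunion, hinter, hcard2, Finset.card_product, Nat.card_Icc] at this
  have hc1 : S₁.card = ∑ a ∈ Finset.Icc 1 K, N / a := card_filter_fst N
  simp only [Nat.add_sub_cancel] at this
  omega

lemma hyperbola (N : ℕ) :
    sumDiv N + N.sqrt * N.sqrt = 2 * ∑ a ∈ Finset.Icc 1 N.sqrt, N / a := by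
  rw [sumDiv_eq_card]; exact hyperbola' N

-- term bound
lemma div_cast_bound (N a : ℕ) (ha : 1 ≤ a) :
    |((N / a : ℕ) : ℝ) - (N : ℝ) * (a : ℝ)⁻¹| ≤ 1 := by
  have ha' : (0:ℝ) < a := by exact_mod_cast ha
  have h1 : ((N / a : ℕ) : ℝ) ≤ (N : ℝ) / a := Nat.cast_div_le
  have h2 : N < (N / a + 1) * a := by
    have hm := Nat.div_add_mod N a
    have hmod := Nat.mod_lt N (show 0 < a by omega)
    calc N = a * (N / a) + N % a := hm.symm
      _ < a * (N / a) + a := by omega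
      _ = (N / a + 1) * a := by ring
  have h2' : (N : ℝ) < (((N / a : ℕ) : ℝ) + 1) * a := by exact_mod_cast h2
  rw [abs_le]
  constructor
  · have : (N : ℝ) * (a:ℝ)⁻¹ < ((N / a : ℕ) : ℝ) + 1 := by
      rw [mul_inv_lt_iff₀ ha']; linarith
    linarith
  · rw [div_eq_mul_inv] at h1; linarith

-- log(K+1) - log K ≤ 1/K
lemma log_succ_sub (K : ℕ) (hK : 1 ≤ K) :
    Real.log (K + 1) - Real.log K ≤ 1 / K := by
  have hK' : (0:ℝ) < K := by exact_mod_cast hK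
  rw [← Real.log_div (by positivity) (by positivity)]
  have := Real.log_le_sub_one_of_pos (x := ((K:ℝ)+1)/K) (by positivity)
  calc Real.log (((K:ℝ)+1)/K) ≤ ((K:ℝ)+1)/K - 1 := this
    _ = 1 / K := by field_simp; ring

/-- For `N ≥ 3`, `|N(log N + 2γ − 1) − D(N)| ≤ C √N` for an absolute constant `C`,
where `γ` is the Euler–Mascheroni constant. -/
theorem sumDiv_normalization :
    ∃ C : ℝ, 0 < C ∧ ∀ N : ℕ, 3 ≤ N →
      |(N : ℝ) * (Real.log N + 2 * Real.eulerMascheroniConstant - 1) - (sumDiv N : ℝ)|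
        ≤ C * Real.sqrt N := by
  refine ⟨20, by norm_num, fun N hN => ?_⟩
  set γ := Real.eulerMascheroniConstant with hγ
  set K := N.sqrt with hKdef
  have hK1 : 1 ≤ K := by
    have : 1 = Nat.sqrt 1 := rfl
    rw [this, hKdef]; exact Nat.sqrt_le_sqrt (by omega)
  have hKR : (1:ℝ) ≤ (K:ℝ) := by exact_mod_cast hK1
  have hKpos : (0:ℝ) < K := by linarith
  -- basic sqrt facts
  have hlow : K * K ≤ N := by have := Nat.sqrt_le' N; rwa [pow_two] at this
  have hhigh : N < (K + 1) * (K + 1) := by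
    have := Nat.lt_succ_sqrt' N; rw [pow_two] at this
    simpa [Nat.succ_eq_add_one] using this
  have hlowR : (K:ℝ) * K ≤ (N:ℝ) := by exact_mod_cast hlow
  have hhighR : (N:ℝ) < ((K:ℝ) + 1) * ((K:ℝ) + 1) := by exact_mod_cast hhigh
  have hN4 : (N:ℝ) ≤ 4 * ((K:ℝ) * K) := by nlinarith
  have hKsqrt : (K:ℝ) ≤ Real.sqrt N := by
    rw [show (K:ℝ) = Real.sqrt ((K:ℝ)*K) by
      rw [Real.sqrt_mul_self (by positivity)]]
    exact Real.sqrt_le_sqrt hlowR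
  -- sums
  set Sn : ℝ := ∑ a ∈ Finset.Icc 1 K, ((N / a : ℕ) : ℝ) with hSn
  set H : ℝ := ∑ a ∈ Finset.Icc 1 K, ((a:ℕ):ℝ)⁻¹ with hH
  -- f1 : cast of hyperbola
  have f1 : (sumDiv N : ℝ) = 2 * Sn - (K:ℝ) * K := by
    have := hyperbola N
    have hcast : (sumDiv N : ℝ) + (K:ℝ) * K = 2 * Sn := by
      rw [hSn, ← Nat.cast_sum]
      exact_mod_cast this
    linarith
  -- f2 : |Sn - N * H| ≤ K
  have f2 : |Sn - (N:ℝ) * H| ≤ (K:ℝ) := by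
    rw [hSn, hH, Finset.mul_sum, ← Finset.sum_sub_distrib]
    calc |∑ a ∈ Finset.Icc 1 K, (((N / a : ℕ) : ℝ) - (N:ℝ) * ((a:ℕ):ℝ)⁻¹)|
        ≤ ∑ a ∈ Finset.Icc 1 K, |((N / a : ℕ) : ℝ) - (N:ℝ) * ((a:ℕ):ℝ)⁻¹| :=
          Finset.abs_sum_le_sum_abs _ _
      _ ≤ ∑ a ∈ Finset.Icc 1 K, 1 := by
          refine Finset.sum_le_sum fun a ha => ?_
          exact div_cast_bound N a (Finset.mem_Icc.1 ha).1
      _ = (K:ℝ) := by simp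
  -- harmonic = H
  have hharm : ((harmonic K : ℚ) : ℝ) = H := by
    rw [harmonic_eq_sum_Icc, hH]; push_cast; rfl
  -- f3 : |H - log K - γ| ≤ 1/K
  have f3 : |H - Real.log K - γ| ≤ 1 / K := by
    have hup := Real.eulerMascheroniConstant_lt_eulerMascheroniSeq' K
    rw [Real.eulerMascheroniSeq', if_neg (by omega), hharm] at hup
    have hlo := Real.eulerMascheroniSeq_lt_eulerMascheroniConstant K
    rw [Real.eulerMascheroniSeq, hharm] at hlo
    have hls := log_succ_sub K hK1
    rw [abs_le]
    constructor
    · linarith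
    · linarith
  -- f4 : 0 ≤ log N - 2 log K ≤ 2/K
  have f4a : 0 ≤ Real.log N - 2 * Real.log K := by
    have : Real.log ((K:ℝ) * K) ≤ Real.log N := Real.log_le_log (by positivity) hlowR
    rw [Real.log_mul (by positivity) (by positivity)] at this
    linarith
  have f4b : Real.log N - 2 * Real.log K ≤ 2 / K := by
    have h1 : Real.log N ≤ Real.log (((K:ℝ)+1) * ((K:ℝ)+1)) :=
      Real.log_le_log (by positivity) (le_of_lt hhighR)
    rw [Real.log_mul (by positivity) (by positivity)] at h1
    have h2 := log_succ_sub K hK1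
    have : Real.log N ≤ 2 * Real.log ((K:ℝ)+1) := by linarith
    have h3 : Real.log N ≤ 2 * (Real.log K + 1/K) := by linarith
    have h4 : 2/(K:ℝ) = 2*(1/K) := by ring
    linarith
  -- f5
  have f5a : (0:ℝ) ≤ (N:ℝ) - (K:ℝ)*K := by linarith
  have f5b : (N:ℝ) - (K:ℝ)*K ≤ 2*K := by
    have e : (K+1)*(K+1) = K*K+2*K+1 := by ring
    rw [e] at hhigh
    have : N ≤ K*K + 2*K := by omega
    have : (N:ℝ) ≤ (K:ℝ)*K + 2*K := by exact_mod_cast this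
    linarith
  -- assemble
  set A := Real.log N - 2 * Real.log K with hA
  set B := H - Real.log K - γ with hB
  set Cc := Sn - (N:ℝ) * H with hC
  set Dd := (N:ℝ) - (K:ℝ)*K with hD
  have key : (N : ℝ) * (Real.log N + 2 * γ - 1) - (sumDiv N : ℝ)
      = (N:ℝ) * A + (-(2 * ((N:ℝ) * B))) + (-(2 * Cc)) + (-Dd) := by
    rw [f1, hA, hB, hC, hD]; ring
  have hNA : |(N:ℝ) * A| ≤ 8 * K := by
    rw [abs_of_nonneg (mul_nonneg (by positivity) f4a)]
    calc (N:ℝ) * A ≤ (4 * ((K:ℝ)*K)) * (2/K) := by gcongr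
      _ = 8 * K := by field_simp; ring
  have hNB : |2 * ((N:ℝ) * B)| ≤ 8 * K := by
    rw [abs_mul, abs_mul, abs_of_nonneg (by norm_num : (0:ℝ) ≤ 2),
        abs_of_nonneg (by positivity : (0:ℝ) ≤ (N:ℝ))]
    have : (N:ℝ) * |B| ≤ (4 * ((K:ℝ)*K)) * (1/K) := by
      have hf3 : |B| ≤ 1/(K:ℝ) := by rw [hB]; simpa [one_div] using f3
      gcongr
    calc 2 * ((N:ℝ) * |B|) ≤ 2 * ((4 * ((K:ℝ)*K)) * (1/K)) := by linarith
      _ = 8 * K := by field_simp; ring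
  have hCc : |2 * Cc| ≤ 2 * K := by
    rw [abs_mul, abs_of_nonneg (by norm_num : (0:ℝ) ≤ 2)]
    linarith
  have hDd : |Dd| ≤ 2 * K := by rw [abs_of_nonneg f5a]; linarith
  have habs4 : ∀ w x y z : ℝ, |w + x + y + z| ≤ |w| + |x| + |y| + |z| := by
    intro w x y z
    calc |w + x + y + z| ≤ |w + x + y| + |z| := abs_add_le _ _
      _ ≤ |w + x| + |y| + |z| := by linarith [abs_add_le (w + x) y]
      _ ≤ |w| + |x| + |y| + |z| := by linarith [abs_add_le w x]
  calc |(N : ℝ) * (Real.log N + 2 * γ - 1) - (sumDiv N : ℝ)|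
      = |(N:ℝ) * A + (-(2 * ((N:ℝ) * B))) + (-(2 * Cc)) + (-Dd)| := by rw [key]
    _ ≤ |(N:ℝ) * A| + |(-(2 * ((N:ℝ) * B)))| + |(-(2 * Cc))| + |(-Dd)| := habs4 _ _ _ _
    _ ≤ 8*K + 8*K + 2*K + 2*K := by
        rw [abs_neg, abs_neg, abs_neg]; linarith
    _ = 20 * (K:ℝ) := by ring
    _ ≤ 20 * Real.sqrt N := by linarith
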